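/- Let f, g : ℝ≥0² → ℝ be continuous and suppose there exists v₀ ≥ 0 such that liminf_{u→∞} f(u, v₀) > 0 and lim_{u→∞} |f(u,v₀)/g(u,v₀)| = ∞. Then there is no C² function W : ℝ≥0² → ℝ≥0 satisfying all of: (i) there exists K̄ > 0 such that ∂W/∂u·f + ∂W/∂v·g ≤ 0 whenever u+v ≥ K̄; (ii) ∂²W/∂u² > 0, ∂²W/∂v² > 0, ∂²W/∂u∂v ≥ 0; (iii) W(u,v) → ∞ as u+v → ∞; (iv) for every fixed v, sup_{u ≥ ū} |∂W/∂v(u,v)/∂W/∂u(u,v)| < ∞, where ū is such that ∂W/∂u > 0 for u ≥ ū. -/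
import Mathlib


open Filter Topology

/-- if `liminf_{u→∞} f(u,v₀) > 0` and `|f/g|(·,v₀) → ∞`, then no
Lyapunov-like function exists: no C² nonnegative `W` on the quadrant can satisfy
(i) decrease along reactions at large total concentration, (ii) convexity,
(iii) radial unboundedness, and (iv) bounded level-set tangent slopes. -/
theorem stmt5
    (f g : ℝ → ℝ → ℝ)
    (hfc : Continuous fun p : ℝ × ℝ => f p.1 p.2)
    (hgc : Continuous fun p : ℝ × ℝ => g p.1 p.2)
    (v₀ : ℝ) (hv₀ : 0 ≤ v₀)
    (hliminf : ∃ ε > (0 : ℝ), ∃ U : ℝ, ∀ u : ℝ, U ≤ u → ε ≤ f u v₀)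
    (hratio : Tendsto (fun u : ℝ => |f u v₀ / g u v₀|) atTop atTop) :
    ¬ ∃ W Wu Wv Wuu Wvv Wuv : ℝ → ℝ → ℝ,
      (∀ u v : ℝ, 0 ≤ u → 0 ≤ v → 0 ≤ W u v) ∧
      (∀ u v : ℝ, 0 ≤ u → 0 ≤ v → HasDerivAt (fun x => W x v) (Wu u v) u) ∧
      (∀ u v : ℝ, 0 ≤ u → 0 ≤ v → HasDerivAt (fun y => W u y) (Wv u v) v) ∧
      (∀ u v : ℝ, 0 ≤ u → 0 ≤ v → HasDerivAt (fun x => Wu x v) (Wuu u v) u) ∧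
      (∀ u v : ℝ, 0 ≤ u → 0 ≤ v → HasDerivAt (fun y => Wv u y) (Wvv u v) v) ∧
      (∀ u v : ℝ, 0 ≤ u → 0 ≤ v → HasDerivAt (fun y => Wu u y) (Wuv u v) v) ∧
      (Continuous fun p : ℝ × ℝ => Wuu p.1 p.2) ∧
      (Continuous fun p : ℝ × ℝ => Wvv p.1 p.2) ∧
      (Continuous fun p : ℝ × ℝ => Wuv p.1 p.2) ∧
      -- (i) decrease along reaction trajectories at large total concentration
      (∃ K > (0 : ℝ), ∀ u v : ℝ, 0 ≤ u → 0 ≤ v → K ≤ u + v →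
        Wu u v * f u v + Wv u v * g u v ≤ 0) ∧
      -- (ii) convexity
      (∀ u v : ℝ, 0 ≤ u → 0 ≤ v → 0 < Wuu u v ∧ 0 < Wvv u v ∧ 0 ≤ Wuv u v) ∧
      -- (iii) radial unboundedness
      (∀ C : ℝ, ∃ R : ℝ, ∀ u v : ℝ, 0 ≤ u → 0 ≤ v → R ≤ u + v → C ≤ W u v) ∧
      -- (iv) bounded level-set tangent slopes
      (∃ ubar : ℝ, 0 ≤ ubar ∧ (∀ u v : ℝ, ubar ≤ u → 0 ≤ v → 0 < Wu u v) ∧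
        ∀ v : ℝ, 0 ≤ v → ∃ C : ℝ, ∀ u : ℝ, ubar ≤ u → |Wv u v / Wu u v| ≤ C) := by
  rintro ⟨W, Wu, Wv, Wuu, Wvv, Wuv, -, -, -, -, -, -, -, -, -,
    ⟨K, hK, hdec⟩, -, -, ⟨ubar, hubar, hWupos, hslope⟩⟩
  obtain ⟨ε, hε, U, hU⟩ := hliminf
  obtain ⟨C, hC⟩ := hslope v₀ hv₀
  obtain ⟨U₂, hU₂⟩ := eventually_atTop.mp (hratio.eventually_ge_atTop (C + 1))
  set u := max (max ubar U) (max K U₂) with hu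
  have hub : ubar ≤ u := le_trans (le_max_left _ _) (le_max_left _ _)
  have hUu : U ≤ u := le_trans (le_max_right _ _) (le_max_left _ _)
  have hKu : K ≤ u := le_trans (le_max_left _ _) (le_max_right _ _)
  have h2 : U₂ ≤ u := le_trans (le_max_right _ _) (le_max_right _ _)
  have h0u : 0 ≤ u := le_trans hK.le hKu
  have hWu := hWupos u v₀ hub hv₀
  have hf := hU u hUu
  have hfpos : 0 < f u v₀ := lt_of_lt_of_le hε hf
  have hdec' := hdec u v₀ h0u hv₀ (by linarith)
  have hCb := hC u hub
  have hrb := hU₂ u h2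
  have hC0 : 0 ≤ C := le_trans (abs_nonneg _) hCb
  by_cases hg : g u v₀ = 0
  · rw [hg, div_zero, abs_zero] at hrb; linarith
  · have hgpos : 0 < |g u v₀| := abs_pos.mpr hg
    have key : Wu u v₀ * f u v₀ ≤ |Wv u v₀| * |g u v₀| := by
      calc Wu u v₀ * f u v₀ ≤ -(Wv u v₀ * g u v₀) := by linarith
        _ ≤ |Wv u v₀ * g u v₀| := neg_le_abs _
        _ = |Wv u v₀| * |g u v₀| := abs_mul _ _
    have h1 : |f u v₀ / g u v₀| ≤ |Wv u v₀ / Wu u v₀| := by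
      rw [abs_div, abs_div, abs_of_pos hfpos, abs_of_pos hWu,
        div_le_div_iff₀ hgpos hWu]
      nlinarith [key]
    linarith
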